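/- Let w be a cyclically reduced word of length m over Σ_k that is not the identity and not a proper power. Let Γ̃_w be the simple directed cycle of length m whose edges are labeled and directed according to the letters of w. Define the graph Υ whose vertices are the C(m,2) unordered pairs of distinct vertices of Γ̃_w, with a j-labeled edge from {origin(ε_1), origin(ε_2)} to {terminus(ε_1), terminus(ε_2)} for each unordered pair {ε_1, ε_2} of distinct j-labeled edges of Γ̃_w. Then Υ contains no cycles, and hence the number of connected components of Υ equals C(m,2) − Σ_{j=1}^k C(e^j,2), where e^j is the number of j-labeled edges of Γ̃_w. -/

import Mathlib

/-- A letter `g_i^{±1}` of the alphabet `Σ_k`. -/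
abbrev Letter (k : ℕ) := Fin k × Bool

/-- The inverse letter: `(g_i^{α})⁻¹ = g_i^{-α}`. -/
def Letter.inv {k : ℕ} (x : Letter k) : Letter k := (x.1, !x.2)

/-- `w` is cyclically reduced: no two cyclically consecutive letters are mutually inverse. -/
def CyclicallyReduced {k : ℕ} (w : List (Letter k)) : Prop :=
  ∀ i : Fin w.length,
    w.get ⟨((i : ℕ) + 1) % w.length, Nat.mod_lt _ i.pos⟩ ≠ Letter.inv (w.get i)

/-- The element of the free group `F_k` represented by a word over `Σ_k`. -/
def toFree {k : ℕ} (w : List (Letter k)) : FreeGroup (Fin k) :=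
  (w.map fun x => if x.2 then FreeGroup.of x.1 else (FreeGroup.of x.1)⁻¹).prod

/-- The cyclic successor of a vertex of the cycle graph `Γ̃_w` (on `|w|` vertices). -/
def nxt {k : ℕ} {w : List (Letter k)} (h : Fin w.length) : Fin w.length :=
  ⟨((h : ℕ) + 1) % w.length, Nat.mod_lt _ h.pos⟩

/-- The origin of the `h`-th edge of `Γ̃_w` (the edge joins `v_h` and `v_{h+1}` and is
directed according to the sign of the `h`-th letter of `w`). -/
def org {k : ℕ} (w : List (Letter k)) (h : Fin w.length) : Fin w.length :=
  if (w.get h).2 then h else nxt h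

/-- The terminus of the `h`-th edge of `Γ̃_w`. -/
def ter {k : ℕ} (w : List (Letter k)) (h : Fin w.length) : Fin w.length :=
  if (w.get h).2 then nxt h else h

/-- The pair-graph `Υ` of `Γ̃_w`: its vertices are the unordered pairs of distinct
vertices of `Γ̃_w`, and for every pair of distinct equally-labeled edges `ε₁, ε₂` of
`Γ̃_w` there is an edge joining `{origin ε₁, origin ε₂}` and `{terminus ε₁, terminus ε₂}`. -/
def Upsilon {k : ℕ} (w : List (Letter k)) :
    SimpleGraph {p : Sym2 (Fin w.length) // ¬ p.IsDiag} where
  Adj P Q := P ≠ Q ∧ ∃ h h' : Fin w.length, h ≠ h' ∧ (w.get h).1 = (w.get h').1 ∧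
    ((P.1 = s(org w h, org w h') ∧ Q.1 = s(ter w h, ter w h')) ∨
     (Q.1 = s(org w h, org w h') ∧ P.1 = s(ter w h, ter w h')))
  symm := by
    constructor
    rintro P Q ⟨hne, h, h', hhh, hl, hc⟩
    exact ⟨hne.symm, h, h', hhh, hl, hc.symm⟩
  loopless := by constructor; rintro P ⟨hne, -⟩; exact hne rfl

/-- The number of `j`-labeled edges of `Γ̃_w`. -/
def labelCount {k : ℕ} (w : List (Letter k)) (j : Fin k) : ℕ :=
  (Finset.univ.filter fun h : Fin w.length => (w.get h).1 = j).card

namespace Stage1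
variable {k : ℕ} {w : List (Letter k)}


@[simp] lemma Letter.inv_inv (x : Letter k) : x.inv.inv = x := by
  cases x; simp [Letter.inv]

lemma Letter.ne_inv (x : Letter k) : x ≠ x.inv := by
  cases x; simp [Letter.inv]

lemma hcyc' (hcyc : CyclicallyReduced w) (t : Fin w.length) :
    w.get (nxt t) ≠ Letter.inv (w.get t) := hcyc t

lemma val_nxt (a : Fin w.length) : (nxt a).val = (a.val + 1) % w.length := rfl

lemma nxt_iter_val (c : ℕ) (a : Fin w.length) :
    ((nxt^[c]) a).val = (a.val + c) % w.length := by
  induction c with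
  | zero => simp [Nat.mod_eq_of_lt a.isLt]
  | succ n ih =>
      rw [Function.iterate_succ_apply', val_nxt, ih, Nat.mod_add_mod, Nat.add_assoc]

def prv {k : ℕ} {w : List (Letter k)} (a : Fin w.length) : Fin w.length :=
  ⟨(a.val + (w.length - 1)) % w.length, Nat.mod_lt _ a.pos⟩

lemma prv_val (a : Fin w.length) : (prv a).val = (a.val + (w.length - 1)) % w.length := rfl

lemma nxt_prv (a : Fin w.length) : nxt (prv a) = a := by
  have hm : 0 < w.length := a.pos
  apply Fin.ext
  rw [val_nxt, prv_val, Nat.mod_add_mod]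
  have h1 : a.val + (w.length - 1) + 1 = a.val + w.length := by omega
  rw [h1, Nat.add_mod_right, Nat.mod_eq_of_lt a.isLt]

lemma prv_nxt (a : Fin w.length) : prv (nxt a) = a := by
  have hm : 0 < w.length := a.pos
  apply Fin.ext
  rw [prv_val, val_nxt, Nat.mod_add_mod]
  have h1 : a.val + 1 + (w.length - 1) = a.val + w.length := by omega
  rw [h1, Nat.add_mod_right, Nat.mod_eq_of_lt a.isLt]

lemma nxt_injective {a b : Fin w.length} (h : nxt a = nxt b) : a = b := by
  rw [← prv_nxt a, h, prv_nxt]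

lemma nxt_iter_dvd {c : ℕ} {a : Fin w.length} (h : nxt^[c] a = a) : w.length ∣ c := by
  have hv := congrArg Fin.val h
  rw [nxt_iter_val] at hv
  have h2 : a.val + c ≡ a.val + 0 [MOD w.length] := by
    unfold Nat.ModEq
    rw [hv, Nat.add_zero, Nat.mod_eq_of_lt a.isLt]
  have h3 : c ≡ 0 [MOD w.length] := Nat.ModEq.add_left_cancel' a.val h2
  exact (Nat.modEq_zero_iff_dvd).1 h3

lemma nxt_iter_of_dvd {c : ℕ} (hc : w.length ∣ c) (a : Fin w.length) : nxt^[c] a = a := by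
  obtain ⟨q, rfl⟩ := hc
  apply Fin.ext
  rw [nxt_iter_val, Nat.add_mul_mod_self_left, Nat.mod_eq_of_lt a.isLt]

lemma nxt_ne (hm2 : 2 ≤ w.length) (a : Fin w.length) : nxt a ≠ a := by
  intro h
  have : w.length ∣ 1 := nxt_iter_dvd (c := 1) (by simpa using h)
  have := Nat.le_of_dvd (by norm_num) this
  omega

lemma nxt_nxt_ne (hm3 : 3 ≤ w.length) (a : Fin w.length) : nxt (nxt a) ≠ a := by
  intro h
  have : w.length ∣ 2 := nxt_iter_dvd (c := 2) (by simpa using h)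
  have := Nat.le_of_dvd (by norm_num) this
  omega

lemma eq_four_of_iter4 (hm3 : 3 ≤ w.length) {a : Fin w.length}
    (h : nxt (nxt (nxt (nxt a))) = a) : w.length = 4 := by
  have h4 : nxt^[4] a = a := by
    simpa [Function.iterate_succ_apply'] using h
  have hd : w.length ∣ 4 := nxt_iter_dvd h4
  have := Nat.le_of_dvd (by norm_num) hd
  have h34 : w.length = 3 ∨ w.length = 4 := by omega
  rcases h34 with h3 | h4'
  · rw [h3] at hd; norm_num at hd
  · exact h4'

lemma nxt_iter_mod (c : ℕ) (a : Fin w.length) :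
    nxt^[c] a = nxt^[c % w.length] a := by
  apply Fin.ext
  rw [nxt_iter_val, nxt_iter_val]
  exact ((Nat.mod_modEq c w.length).add_left a.val).symm

lemma reach (a t : Fin w.length) : nxt^[(t.val + w.length) - a.val] a = t := by
  apply Fin.ext
  rw [nxt_iter_val]
  have h1 : a.val + ((t.val + w.length) - a.val) = t.val + w.length := by
    have := a.isLt; omega
  rw [h1, Nat.add_mod_right, Nat.mod_eq_of_lt t.isLt]


lemma org_pos {h : Fin w.length} (hb : (w.get h).2 = true) : org w h = h := by
  unfold org; rw [hb]; simp
lemma org_neg {h : Fin w.length} (hb : (w.get h).2 = false) : org w h = nxt h := by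
  unfold org; rw [hb]; simp
lemma ter_pos {h : Fin w.length} (hb : (w.get h).2 = true) : ter w h = nxt h := by
  unfold ter; rw [hb]; simp
lemma ter_neg {h : Fin w.length} (hb : (w.get h).2 = false) : ter w h = h := by
  unfold ter; rw [hb]; simp

/-- The "move" relation: from position `a`, reading letter `x`, one gets to `b`. -/
def mv (w : List (Letter k)) (a : Fin w.length) (x : Letter k) (b : Fin w.length) : Prop :=
  (w.get a = x ∧ b = nxt a) ∨ (w.get b = Letter.inv x ∧ a = nxt b)

lemma mv_det (hcyc : CyclicallyReduced w) (hm3 : 3 ≤ w.length)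
    {a b b' : Fin w.length} {x : Letter k} (h1 : mv w a x b) (h2 : mv w a x b') : b = b' := by
  rcases h1 with ⟨e1, e2⟩ | ⟨e1, e2⟩ <;> rcases h2 with ⟨f1, f2⟩ | ⟨f1, f2⟩
  · rw [e2, f2]
  · exact absurd (by rw [← f2, e1, f1, Letter.inv_inv]) (hcyc' hcyc b')
  · exact absurd (by rw [← e2, f1, e1, Letter.inv_inv]) (hcyc' hcyc b)
  · exact nxt_injective (e2 ▸ f2)

lemma mv_inj (hcyc : CyclicallyReduced w)
    {a a' b : Fin w.length} {x : Letter k} (h1 : mv w a x b) (h2 : mv w a' x b) : a = a' := by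
  rcases h1 with ⟨e1, e2⟩ | ⟨e1, e2⟩ <;> rcases h2 with ⟨f1, f2⟩ | ⟨f1, f2⟩
  · exact nxt_injective (e2.symm.trans f2)
  · exact absurd (by rw [← e2, f1, e1]) (hcyc' hcyc a)
  · exact absurd (by rw [← f2, e1, f1]) (hcyc' hcyc a')
  · rw [e2, f2]

lemma mv_rev {a b : Fin w.length} {x : Letter k} (h : mv w a x b) :
    mv w b (Letter.inv x) a := by
  rcases h with ⟨e1, e2⟩ | ⟨e1, e2⟩
  · exact Or.inr ⟨by rw [Letter.inv_inv, e1], e2⟩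
  · exact Or.inl ⟨e1, e2⟩

lemma mv_dir (hm3 : 3 ≤ w.length) {a b c : Fin w.length} {x y : Letter k}
    (h1 : mv w a x b) (h2 : mv w b y c) (hxy : y ≠ Letter.inv x) :
    (b = nxt a ∧ c = nxt b) ∨ (a = nxt b ∧ b = nxt c) := by
  rcases h1 with ⟨e1, e2⟩ | ⟨e1, e2⟩
  · left
    refine ⟨e2, ?_⟩
    rcases h2 with ⟨f1, f2⟩ | ⟨f1, f2⟩
    · exact f2
    · exfalso
      have hca : c = a := nxt_injective (f2.symm.trans e2)
      rw [hca, e1] at f1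
      exact hxy (by rw [f1, Letter.inv_inv])
  · right
    refine ⟨e2, ?_⟩
    rcases h2 with ⟨f1, f2⟩ | ⟨f1, f2⟩
    · exact absurd (f1.symm.trans e1) hxy
    · exact f2

lemma get_eq_true {h : Fin w.length} (hb : (w.get h).2 = true) :
    w.get h = ((w.get h).1, true) := by rw [← hb]

lemma get_eq_false {h : Fin w.length} (hb : (w.get h).2 = false) :
    w.get h = ((w.get h).1, false) := by rw [← hb]

lemma inv_pair (j : Fin k) : Letter.inv (j, true) = (j, false) := rfl
lemma inv_pair' (j : Fin k) : Letter.inv (j, false) = (j, true) := rfl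

lemma mv_org_ter (h : Fin w.length) : mv w (org w h) ((w.get h).1, true) (ter w h) := by
  cases hb : (w.get h).2
  · refine Or.inr ?_
    rw [org_neg hb, ter_neg hb, inv_pair]
    exact ⟨get_eq_false hb, rfl⟩
  · refine Or.inl ?_
    rw [org_pos hb, ter_pos hb]
    exact ⟨get_eq_true hb, rfl⟩

lemma mv_ter_org (h : Fin w.length) : mv w (ter w h) ((w.get h).1, false) (org w h) := by
  have := mv_rev (mv_org_ter h)
  rwa [inv_pair] at this

lemma org_inj (hcyc : CyclicallyReduced w) {h h' : Fin w.length}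
    (hlab : (w.get h).1 = (w.get h').1) (he : org w h = org w h') : h = h' := by
  cases hb : (w.get h).2 <;> cases hb' : (w.get h').2
  · rw [org_neg hb, org_neg hb'] at he; exact nxt_injective he
  · rw [org_neg hb, org_pos hb'] at he
    exfalso
    apply hcyc' hcyc h
    rw [he, get_eq_true hb', ← hlab, get_eq_false hb, inv_pair']
  · rw [org_pos hb, org_neg hb'] at he
    exfalso
    apply hcyc' hcyc h'
    rw [← he, get_eq_true hb, hlab, get_eq_false hb', inv_pair']
  · rw [org_pos hb, org_pos hb'] at he; exact he

lemma ter_inj (hcyc : CyclicallyReduced w) {h h' : Fin w.length}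
    (hlab : (w.get h).1 = (w.get h').1) (he : ter w h = ter w h') : h = h' := by
  cases hb : (w.get h).2 <;> cases hb' : (w.get h').2
  · rw [ter_neg hb, ter_neg hb'] at he; exact he
  · rw [ter_neg hb, ter_pos hb'] at he
    exfalso
    apply hcyc' hcyc h'
    rw [← he, get_eq_false hb, hlab, get_eq_true hb', inv_pair]
  · rw [ter_pos hb, ter_neg hb'] at he
    exfalso
    apply hcyc' hcyc h
    rw [he, get_eq_false hb', ← hlab, get_eq_true hb, inv_pair]
  · rw [ter_pos hb, ter_pos hb'] at he; exact nxt_injective he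

lemma org_ter_inj (hm3 : 3 ≤ w.length) {h g : Fin w.length}
    (ho : org w h = org w g) (ht : ter w h = ter w g) : h = g := by
  cases hb : (w.get h).2 <;> cases hb' : (w.get g).2
  · rw [ter_neg hb, ter_neg hb'] at ht; exact ht
  · rw [org_neg hb, org_pos hb'] at ho
    rw [ter_neg hb, ter_pos hb'] at ht
    exact absurd (by rw [ho, ← ht]) (nxt_nxt_ne hm3 h)
  · rw [org_pos hb, org_neg hb'] at ho
    rw [ter_pos hb, ter_neg hb'] at ht
    exact absurd (by rw [← ho]; exact ht) (nxt_nxt_ne hm3 g)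
  · rw [org_pos hb, org_pos hb'] at ho; exact ho

lemma org_ne_ter (hm2 : 2 ≤ w.length) (h : Fin w.length) : org w h ≠ ter w h := by
  cases hb : (w.get h).2
  · rw [org_neg hb, ter_neg hb]; exact nxt_ne hm2 h
  · rw [org_pos hb, ter_pos hb]; exact (nxt_ne hm2 h).symm


def Periodic (w : List (Letter k)) (d : ℕ) : Prop :=
  d ≠ 0 ∧ d < w.length ∧ ∀ t : Fin w.length, w.get (nxt^[d] t) = w.get t

lemma toFree_append (u v : List (Letter k)) : toFree (u ++ v) = toFree u * toFree v := by
  simp [toFree]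

lemma periodic_block {g : ℕ} (hg : 0 < g) :
    ∀ (e : ℕ) (l : List (Letter k)), l.length = g * e →
    (∀ i j : ℕ, (hi : i < l.length) → (hj : j < l.length) → i % g = j % g →
      l.get ⟨i, hi⟩ = l.get ⟨j, hj⟩) →
    toFree l = (toFree (l.take g)) ^ e := by
  intro e
  induction e with
  | zero =>
      intro l hl _
      have hnil : l = [] := List.length_eq_zero_iff.1 (by simpa using hl)
      subst hnil
      simp [toFree]
  | succ e ih =>
      intro l hl H
      have hgle : g ≤ g * (e + 1) := Nat.le_mul_of_pos_right g (by omega)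
      have hgl : g ≤ l.length := by omega
      have hsplit : l.take g ++ l.drop g = l := List.take_append_drop g l
      have hdl : (l.drop g).length = g * e := by
        rw [List.length_drop, hl]
        have : g * (e + 1) = g * e + g := by ring
        omega
      have Hd : ∀ i j : ℕ, (hi : i < (l.drop g).length) → (hj : j < (l.drop g).length) →
          i % g = j % g → (l.drop g).get ⟨i, hi⟩ = (l.drop g).get ⟨j, hj⟩ := by
        intro i j hi hj hij
        have hi0 := hi; have hj0 := hj
        rw [List.length_drop] at hi0 hj0
        have hi' : g + i < l.length := by omega
        have hj' : g + j < l.length := by omega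
        have e1 : (l.drop g).get ⟨i, hi⟩ = l.get ⟨g + i, hi'⟩ := by
          simp [List.get_eq_getElem, List.getElem_drop]
        have e2 : (l.drop g).get ⟨j, hj⟩ = l.get ⟨g + j, hj'⟩ := by
          simp [List.get_eq_getElem, List.getElem_drop]
        rw [e1, e2]
        apply H
        rw [Nat.add_mod_left, Nat.add_mod_left]
        exact hij
      have IH := ih (l.drop g) hdl Hd
      rcases Nat.eq_zero_or_pos e with he | he
      · subst he
        have hlg : l.length = g := by simpa using hl
        have hdrop : l.drop g = [] := by
          rw [← List.length_eq_zero_iff, List.length_drop]; omega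
        have htk : l.take g = l := List.take_of_length_le (by omega)
        rw [htk, pow_one, ← hsplit, hdrop, List.append_nil, htk]
      · have hgee : g ≤ g * e := Nat.le_mul_of_pos_right g he
        have htake : (l.drop g).take g = l.take g := by
          apply List.ext_getElem
          · rw [List.length_take, List.length_take, hdl, hl]; omega
          · intro i h1 h2
            have hig : i < g := by
              rw [List.length_take, hdl] at h1; omega
            have hmul : g * (e + 1) = g * e + g := by ring
            have hi1 : g + i < l.length := by omega
            have hi2 : i < l.length := by omega
            rw [List.getElem_take, List.getElem_take, List.getElem_drop]
            have := H (g + i) i hi1 hi2 (by rw [Nat.add_mod_left])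
            simpa [List.get_eq_getElem] using this
        calc toFree l = toFree (l.take g ++ l.drop g) := by rw [hsplit]
          _ = toFree (l.take g) * toFree (l.drop g) := toFree_append _ _
          _ = toFree (l.take g) * (toFree ((l.drop g).take g)) ^ e := by rw [IH]
          _ = toFree (l.take g) * (toFree (l.take g)) ^ e := by rw [htake]
          _ = (toFree (l.take g)) ^ (e + 1) := by rw [pow_succ']

lemma nxt_iter_invariant {d : ℕ} (hinv : ∀ t : Fin w.length, w.get (nxt^[d] t) = w.get t) :
    ∀ (q : ℕ) (t : Fin w.length), w.get (nxt^[d * q] t) = w.get t := by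
  intro q
  induction q with
  | zero => simp
  | succ n ih =>
      intro t
      have : d * (n + 1) = d * n + d := by ring
      rw [this, Function.iterate_add_apply]
      rw [ih (nxt^[d] t), hinv t]

lemma periodic_false (hw : w ≠ []) (hcyc : CyclicallyReduced w)
    (hnp : ¬ ∃ (g : FreeGroup (Fin k)) (d : ℕ), 2 ≤ d ∧ toFree w = g ^ d)
    {d : ℕ} (hper : Periodic w d) : False := by
  obtain ⟨hd0, hdm, hinv⟩ := hper
  have hm : 0 < w.length := List.length_pos_iff.2 hw
  set m := w.length with hmdef
  set g := Nat.gcd d m with hgdef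
  have hgm : g ∣ m := Nat.gcd_dvd_right d m
  have hgd : g ∣ d := Nat.gcd_dvd_left d m
  have hg0 : 0 < g := Nat.gcd_pos_of_pos_left m (by omega)
  have hgltm : g < m := lt_of_le_of_lt (Nat.le_of_dvd (by omega) hgd) hdm
  -- g-invariance via Bezout in ZMod m
  haveI : NeZero m := ⟨by omega⟩
  have hbez : (g : ℤ) = d * Nat.gcdA d m + m * Nat.gcdB d m := Nat.gcd_eq_gcd_ab d m
  have hzmod : (g : ZMod m) = (d : ZMod m) * ((Nat.gcdA d m : ℤ) : ZMod m) := by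
    have := congrArg (fun z : ℤ => (z : ZMod m)) hbez
    push_cast at this
    rw [this]
    simp [ZMod.natCast_self]
  set u : ℕ := (((Nat.gcdA d m : ℤ) : ZMod m)).val with hudef
  have huz : (((Nat.gcdA d m : ℤ) : ZMod m)) = (u : ZMod m) := by
    rw [hudef, ZMod.natCast_val, ZMod.cast_id]
  have hzz : (g : ZMod m) = ((d * u : ℕ) : ZMod m) := by
    rw [hzmod, huz]; push_cast; ring
  have hmodeq : g ≡ d * u [MOD m] := (ZMod.natCast_eq_natCast_iff _ _ _).1 hzz
  have hginv : ∀ t : Fin w.length, w.get (nxt^[g] t) = w.get t := by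
    intro t
    have h1 : nxt^[g] t = nxt^[d * u] t := by
      rw [nxt_iter_mod, nxt_iter_mod (d * u)]
      congr 1
    rw [h1]
    exact nxt_iter_invariant hinv u t
  -- index version
  have H : ∀ i j : ℕ, (hi : i < w.length) → (hj : j < w.length) → i % g = j % g →
      w.get ⟨i, hi⟩ = w.get ⟨j, hj⟩ := by
    have key : ∀ (i : ℕ) (hi : i < w.length),
        w.get ⟨i, hi⟩ = w.get ⟨i % g, lt_of_le_of_lt (Nat.mod_le i g) hi⟩ := by
      intro i hi
      have hfin : (⟨i, hi⟩ : Fin w.length)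
          = nxt^[g * (i / g)] ⟨i % g, lt_of_le_of_lt (Nat.mod_le i g) hi⟩ := by
        apply Fin.ext
        rw [nxt_iter_val]
        show i = (i % g + g * (i / g)) % w.length
        rw [Nat.mod_add_div i g, Nat.mod_eq_of_lt hi]
      rw [hfin, nxt_iter_invariant hginv (i / g)]
    intro i j hi hj hij
    rw [key i hi, key j hj]
    congr 1
    exact Fin.ext (by simpa using hij)
  -- power decomposition
  obtain ⟨e, hme⟩ : ∃ e, m = g * e := hgm
  have he2 : 2 ≤ e := by
    rcases e with _ | _ | e
    · rw [Nat.mul_zero] at hme; omega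
    · rw [Nat.mul_one] at hme; omega
    · omega
  have := periodic_block hg0 e w hme H
  exact hnp ⟨toFree (w.take g), e, he2, this⟩


lemma fwd_val {A : ℕ → Fin w.length} (hA : ∀ i, A (i+1) = nxt (A i)) (i : ℕ) :
    (A i).val = ((A 0).val + i) % w.length := by
  induction i with
  | zero => simp [Nat.mod_eq_of_lt (A 0).isLt]
  | succ n ih => rw [hA n, val_nxt, ih, Nat.mod_add_mod, Nat.add_assoc]

lemma bwd_val {A : ℕ → Fin w.length} (hA : ∀ i, A i = nxt (A (i+1))) (i : ℕ) :
    (A i).val = ((A 0).val + (w.length - 1) * i) % w.length := by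
  induction i with
  | zero => simp [Nat.mod_eq_of_lt (A 0).isLt]
  | succ n ih =>
      have h1 : A (n+1) = prv (A n) := by rw [hA n, prv_nxt]
      rw [h1, prv_val, ih, Nat.mod_add_mod]
      congr 1
      ring

lemma d_ne_zero {m a0 b0 : ℕ} (hm : 0 < m) (ha0 : a0 < m) (hb0 : b0 < m) (hab : a0 ≠ b0) :
    ((b0 + m) - a0) % m ≠ 0 := by
  intro h0
  obtain ⟨q, hq⟩ := Nat.dvd_of_mod_eq_zero h0
  have hq1 : q = 1 := by
    rcases q with _ | _ | q
    · omega
    · rfl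
    · have : m * 2 ≤ m * (q + 1 + 1) := Nat.mul_le_mul_left m (by omega)
      omega
  rw [hq1, Nat.mul_one] at hq
  omega

lemma case_ff (hm3 : 3 ≤ w.length) {A B : ℕ → Fin w.length}
    (hA : ∀ i, A (i+1) = nxt (A i)) (hB : ∀ i, B (i+1) = nxt (B i))
    (hne : A 0 ≠ B 0)
    (hrel : ∀ i, w.get (A i) = w.get (B i)) : ∃ d, Periodic w d := by
  have hm : 0 < w.length := by omega
  have ha0 : (A 0).val < w.length := (A 0).isLt
  have hb0 : (B 0).val < w.length := (B 0).isLt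
  set c : ℕ := ((B 0).val + w.length) - (A 0).val with hc
  refine ⟨c % w.length, d_ne_zero hm ha0 hb0 (fun h => hne (Fin.ext h)), Nat.mod_lt _ hm, ?_⟩
  intro t
  set i := (t.val + w.length) - (A 0).val with hi
  have hreach : A i = t := by
    apply Fin.ext
    rw [fwd_val hA]
    have h1 : (A 0).val + i = t.val + w.length := by have := t.isLt; omega
    rw [h1, Nat.add_mod_right, Nat.mod_eq_of_lt t.isLt]
  have hBt : nxt^[c % w.length] t = B i := by
    apply Fin.ext
    rw [nxt_iter_val, fwd_val hB]
    have h1 : (t.val + c % w.length) % w.length = (t.val + c) % w.length :=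
      ((Nat.mod_modEq c w.length).add_left t.val)
    have h2 : t.val + c = (B 0).val + i := by have := t.isLt; omega
    rw [h1, h2]
  rw [hBt, ← hreach]
  exact (hrel i).symm

lemma sq_pred (hm3 : 3 ≤ w.length) :
    (w.length - 1) * (w.length - 1) = w.length * (w.length - 2) + 1 := by
  obtain ⟨M, hM⟩ : ∃ M, w.length = M + 3 := ⟨w.length - 3, by omega⟩
  rw [hM]
  have h1 : M + 3 - 1 = M + 2 := by omega
  have h2 : M + 3 - 2 = M + 1 := by omega
  rw [h1, h2]
  ring

lemma case_bb (hm3 : 3 ≤ w.length) {A B : ℕ → Fin w.length}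
    (hA : ∀ i, A i = nxt (A (i+1))) (hB : ∀ i, B i = nxt (B (i+1)))
    (hne : A 0 ≠ B 0)
    (hrel : ∀ i, w.get (A (i+1)) = w.get (B (i+1))) : ∃ d, Periodic w d := by
  have hm : 0 < w.length := by omega
  have ha0 : (A 0).val < w.length := (A 0).isLt
  have hb0 : (B 0).val < w.length := (B 0).isLt
  set c : ℕ := ((B 0).val + w.length) - (A 0).val with hc
  refine ⟨c % w.length, d_ne_zero hm ha0 hb0 (fun h => hne (Fin.ext h)), Nat.mod_lt _ hm, ?_⟩
  intro t
  set ct : ℕ := (t.val + w.length) - (A 0).val with hct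
  have hct1 : 1 ≤ ct := by have := t.isLt; omega
  set j : ℕ := ct * (w.length - 1) with hj
  obtain ⟨i, hij⟩ : ∃ i, j = i + 1 := by
    refine ⟨j - 1, ?_⟩
    have : 1 * 1 ≤ ct * (w.length - 1) := Nat.mul_le_mul hct1 (by omega)
    omega
  have hprod : (w.length - 1) * j = ct + w.length * (ct * (w.length - 2)) := by
    calc (w.length - 1) * j = ct * ((w.length - 1) * (w.length - 1)) := by rw [hj]; ring
      _ = ct * (w.length * (w.length - 2) + 1) := by rw [sq_pred hm3]
      _ = ct + w.length * (ct * (w.length - 2)) := by ring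
  have hreach : A j = t := by
    apply Fin.ext
    rw [bwd_val hA]
    have h1 : (A 0).val + (w.length - 1) * j = (t.val + w.length) + w.length * (ct * (w.length - 2)) := by
      rw [hprod]; have := t.isLt; omega
    rw [h1, Nat.add_mul_mod_self_left, Nat.add_mod_right, Nat.mod_eq_of_lt t.isLt]
  have hBt : nxt^[c % w.length] t = B j := by
    apply Fin.ext
    rw [nxt_iter_val, bwd_val hB]
    have h1 : (t.val + c % w.length) % w.length = (t.val + c) % w.length :=
      ((Nat.mod_modEq c w.length).add_left t.val)
    have h2 : (B 0).val + (w.length - 1) * j = (t.val + c) + w.length * (ct * (w.length - 2)) := by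
      rw [hprod]; have := t.isLt; omega
    rw [h1, h2, Nat.add_mul_mod_self_left]
  rw [hBt, ← hreach, hij]
  exact (hrel i).symm

lemma key_arith {L a b i : ℕ} (hL : 1 ≤ L) (hlin : b + (L - 1) = a + 2 * i + 1) :
    b + (L - 1) * (i + 1) = (a + i + 1) + L * i := by
  obtain ⟨M, rfl⟩ : ∃ M, L = M + 1 := ⟨L - 1, by omega⟩
  simp only [Nat.add_sub_cancel] at *
  calc b + M * (i + 1) = (b + M) + M * i := by ring
    _ = (a + 2 * i + 1) + M * i := by rw [hlin]
    _ = (a + i + 1) + (M + 1) * i := by ring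

lemma key_arith' {L a b i : ℕ} (hL : 1 ≤ L) (hlin : b + (L - 1) = a + 2 * i) :
    b + (L - 1) * (i + 1) = (a + i) + L * i := by
  obtain ⟨M, rfl⟩ : ∃ M, L = M + 1 := ⟨L - 1, by omega⟩
  simp only [Nat.add_sub_cancel] at *
  calc b + M * (i + 1) = (b + M) + M * i := by ring
    _ = (a + 2 * i) + M * i := by rw [hlin]
    _ = (a + i) + (M + 1) * i := by ring

lemma case_fb (hcyc : CyclicallyReduced w) (hm3 : 3 ≤ w.length) {A B : ℕ → Fin w.length}
    (hA : ∀ i, A (i+1) = nxt (A i)) (hB : ∀ i, B i = nxt (B (i+1)))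
    (hrel : ∀ i, w.get (B (i+1)) = Letter.inv (w.get (A i))) : False := by
  have hm : 0 < w.length := by omega
  have ha0 : (A 0).val < w.length := (A 0).isLt
  have hb0 : (B 0).val < w.length := (B 0).isLt
  set c : ℕ := ((B 0).val + w.length) - (A 0).val with hc
  obtain ⟨M, hM⟩ : ∃ M, w.length = M + 1 := ⟨w.length - 1, by omega⟩
  have hc1 : 1 ≤ c := by omega
  rcases Nat.even_or_odd c with hev | hod
  · obtain ⟨r, hr⟩ := hev
    have hr1 : 1 ≤ r := by omega
    set i := r - 1 with hidef
    have hceq : c = 2 * i + 2 := by omega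
    have hkey : (B 0).val + (w.length - 1) * (i + 1) = ((A 0).val + i + 1) + w.length * i :=
      key_arith (by omega) (by omega)
    have hpos : B (i+1) = nxt (A i) := by
      apply Fin.ext
      rw [bwd_val hB, val_nxt, fwd_val hA, Nat.mod_add_mod, hkey, Nat.add_mul_mod_self_left]
    have := hrel i
    rw [hpos] at this
    exact hcyc' hcyc (A i) this
  · obtain ⟨i, hi⟩ := hod
    have hkey : (B 0).val + (w.length - 1) * (i + 1) = ((A 0).val + i) + w.length * i :=
      key_arith' (by omega) (by omega)
    have hpos : B (i+1) = A i := by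
      apply Fin.ext
      rw [bwd_val hB, fwd_val hA, hkey, Nat.add_mul_mod_self_left]
    have := hrel i
    rw [hpos] at this
    exact Letter.ne_inv (w.get (A i)) this


lemma exists_iter (a t : Fin w.length) : ∃ c, c < w.length ∧ nxt^[c] a = t := by
  refine ⟨((t.val + w.length) - a.val) % w.length, Nat.mod_lt _ a.pos, ?_⟩
  rw [← nxt_iter_mod]
  exact reach a t

lemma period2 (hm3 : 3 ≤ w.length) {a : Fin w.length}
    (h4 : nxt (nxt (nxt (nxt a))) = a)
    (e1 : w.get (nxt (nxt a)) = w.get a)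
    (e2 : w.get (nxt (nxt (nxt a))) = w.get (nxt a)) : Periodic w 2 := by
  have hm4 : w.length = 4 := eq_four_of_iter4 hm3 h4
  refine ⟨by norm_num, by omega, ?_⟩
  have hall : ∀ z : Fin w.length,
      z = a ∨ z = nxt a ∨ z = nxt (nxt a) ∨ z = nxt (nxt (nxt a)) := by
    intro z
    obtain ⟨c, hc, hz⟩ := exists_iter a z
    rw [hm4] at hc
    interval_cases c
    · left; rw [← hz]; rfl
    · right; left; rw [← hz]; rfl
    · right; right; left; rw [← hz]; rfl
    · right; right; right; rw [← hz]; rfl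
  intro t
  show w.get (nxt (nxt t)) = w.get t
  rcases hall t with rfl | rfl | rfl | rfl
  · exact e1
  · exact e2
  · rw [h4]; exact e1.symm
  · rw [congrArg nxt h4]; exact e2.symm

lemma periodic_one_of {h : Fin w.length} (hm2' : w.length = 2)
    (hgets : w.get (nxt h) = w.get h) : Periodic w 1 := by
  refine ⟨one_ne_zero, by omega, ?_⟩
  intro t
  show w.get (nxt t) = w.get t
  have h2 : nxt (nxt h) = h := by
    have : nxt^[2] h = h := nxt_iter_of_dvd (by rw [hm2']) h
    simpa [Function.iterate_succ_apply'] using this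
  have hall : ∀ z : Fin w.length, z = h ∨ z = nxt h := by
    intro z
    obtain ⟨c, hc, hz⟩ := exists_iter h z
    rw [hm2'] at hc
    interval_cases c
    · left; rw [← hz]; rfl
    · right; rw [← hz]; rfl
  rcases hall t with rfl | rfl
  · exact hgets
  · rw [h2]; exact hgets.symm

lemma cross_scenario (hcyc : CyclicallyReduced w) (hm3 : 3 ≤ w.length)
    {a b t1 t2 : Fin w.length} {x y : Letter k}
    (hab : a ≠ b) (ht : t1 ≠ t2)
    (m1 : mv w a x t1) (m2 : mv w b x t2) (m3 : mv w a y t2) (m4 : mv w b y t1) :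
    Periodic w 2 := by
  rcases m1 with ⟨f1, f2⟩ | ⟨f1, f2⟩ <;> rcases m3 with ⟨g1, g2⟩ | ⟨g1, g2⟩
  · exact absurd (f2.trans g2.symm) ht
  · rcases m2 with ⟨p1, p2⟩ | ⟨p1, p2⟩
    · rcases m4 with ⟨q1, q2⟩ | ⟨q1, q2⟩
      · exact absurd (nxt_injective (f2.symm.trans q2)) hab
      · have hb2 : b = nxt (nxt a) := by rw [q2, f2]
        have ht2' : t2 = nxt (nxt (nxt a)) := by rw [p2, hb2]
        have h4 : nxt (nxt (nxt (nxt a))) = a := by rw [← ht2', ← g2]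
        have e1 : w.get (nxt (nxt a)) = w.get a := by rw [← hb2, p1, f1]
        have e2 : w.get (nxt (nxt (nxt a))) = w.get (nxt a) := by
          rw [← ht2', ← f2, g1, q1]
        exact period2 hm3 h4 e1 e2
    · exact absurd (g2.trans p2.symm) hab
  · rcases m4 with ⟨q1, q2⟩ | ⟨q1, q2⟩
    · rcases m2 with ⟨p1, p2⟩ | ⟨p1, p2⟩
      · exact absurd (nxt_injective (g2.symm.trans p2)) hab
      · have hb2 : b = nxt (nxt a) := by rw [p2, g2]
        have ht1' : t1 = nxt (nxt (nxt a)) := by rw [q2, hb2]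
        have h4 : nxt (nxt (nxt (nxt a))) = a := by rw [← ht1', ← f2]
        have e1 : w.get (nxt (nxt a)) = w.get a := by rw [← hb2, q1, g1]
        have e2 : w.get (nxt (nxt (nxt a))) = w.get (nxt a) := by
          rw [← ht1', ← g2, f1, p1]
        exact period2 hm3 h4 e1 e2
    · exact absurd (f2.trans q2.symm) hab
  · exact absurd (nxt_injective (f2.symm.trans g2)) ht


lemma org_ter_swap_false (hm3 : 3 ≤ w.length) {h g : Fin w.length}
    (e1 : org w h = ter w g) (e2 : ter w h = org w g) : False := by
  cases hb : (w.get h).2 <;> cases hb' : (w.get g).2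
  · rw [org_neg hb, ter_neg hb'] at e1
    rw [ter_neg hb, org_neg hb'] at e2
    exact nxt_nxt_ne hm3 g (by rw [← e2]; exact e1)
  · rw [org_neg hb, ter_pos hb'] at e1
    rw [ter_neg hb, org_pos hb'] at e2
    rw [e2, hb'] at hb
    exact Bool.noConfusion hb
  · rw [org_pos hb, ter_neg hb'] at e1
    rw [ter_pos hb, org_neg hb'] at e2
    rw [e1, hb'] at hb
    exact Bool.noConfusion hb
  · rw [org_pos hb, ter_pos hb'] at e1
    rw [ter_pos hb, org_pos hb'] at e2
    exact nxt_nxt_ne hm3 g (by rw [← e1]; exact e2)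

lemma orgpair_ne_terpair (hcyc : CyclicallyReduced w) (hPF : ∀ d, ¬ Periodic w d)
    {h h' : Fin w.length} (hne : h ≠ h') (hlab : (w.get h).1 = (w.get h').1) :
    s(org w h, org w h') ≠ s(ter w h, ter w h') := by
  have hm2 : 2 ≤ w.length := by
    have h1 := h.isLt
    have h2 := h'.isLt
    have h3 : h.val ≠ h'.val := fun hv => hne (Fin.ext hv)
    omega
  intro heq
  rcases Sym2.eq_iff.1 heq with ⟨e1, _⟩ | ⟨e1, e2⟩
  · exact org_ne_ter hm2 h e1
  · cases hb : (w.get h).2 <;> cases hb' : (w.get h').2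
    · -- both negative : nxt h = h' and nxt h' = h, m = 2, letters equal
      rw [org_neg hb, ter_neg hb'] at e1
      rw [org_neg hb', ter_neg hb] at e2
      have h2 : nxt (nxt h) = h := by rw [e1, e2]
      have hdvd : w.length ∣ 2 :=
        nxt_iter_dvd (c := 2) (by simpa [Function.iterate_succ_apply'] using h2)
      have hm2' : w.length = 2 := by
        have := Nat.le_of_dvd (by norm_num) hdvd
        omega
      apply hPF 1
      apply periodic_one_of hm2'
      rw [e1, get_eq_false hb', ← hlab, get_eq_false hb]
    · rw [org_neg hb, ter_pos hb'] at e1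
      exact hne (nxt_injective e1)
    · rw [org_pos hb, ter_neg hb'] at e1
      exact hne e1
    · rw [org_pos hb, ter_pos hb'] at e1
      rw [org_pos hb', ter_pos hb] at e2
      have h2 : nxt (nxt h) = h := by rw [← e2]; exact e1.symm
      have hdvd : w.length ∣ 2 :=
        nxt_iter_dvd (c := 2) (by simpa [Function.iterate_succ_apply'] using h2)
      have hm2' : w.length = 2 := by
        have := Nat.le_of_dvd (by norm_num) hdvd
        omega
      apply hPF 1
      apply periodic_one_of hm2'
      rw [← e2, get_eq_true hb', ← hlab, get_eq_true hb]

lemma pair_inj_core (hcyc : CyclicallyReduced w) (hm3 : 3 ≤ w.length)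
    (hPF : ∀ d, ¬ Periodic w d) {h h' g g' : Fin w.length}
    (hne1 : h ≠ h') (hlab1 : (w.get h).1 = (w.get h').1)
    (hlab2 : (w.get g).1 = (w.get g').1)
    (o1 : org w h = org w g) (o2 : org w h' = org w g')
    (hT : s(ter w h, ter w h') = s(ter w g, ter w g')) : s(h, h') = s(g, g') := by
  rcases Sym2.eq_iff.1 hT with ⟨t1, t2⟩ | ⟨t1, t2⟩
  · rw [org_ter_inj hm3 o1 t1, org_ter_inj hm3 o2 t2]
  · exfalso
    apply hPF 2
    have hab : org w h ≠ org w h' := fun e => hne1 (org_inj hcyc hlab1 e)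
    have hth : ter w h ≠ ter w h' := fun e => hne1 (ter_inj hcyc hlab1 e)
    have m1 := mv_org_ter h
    have m2 := mv_org_ter h'
    rw [← hlab1] at m2
    have m3 := mv_org_ter g
    rw [← o1, ← t2] at m3
    have m4 := mv_org_ter g'
    rw [← hlab2] at m4
    rw [← o2, ← t1] at m4
    exact cross_scenario hcyc hm3 hab hth m1 m2 m3 m4

lemma pair_inj (hcyc : CyclicallyReduced w) (hm3 : 3 ≤ w.length)
    (hPF : ∀ d, ¬ Periodic w d) {h h' g g' : Fin w.length}
    (hne1 : h ≠ h') (hne2 : g ≠ g')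
    (hlab1 : (w.get h).1 = (w.get h').1) (hlab2 : (w.get g).1 = (w.get g').1)
    (hO : s(org w h, org w h') = s(org w g, org w g'))
    (hT : s(ter w h, ter w h') = s(ter w g, ter w g')) : s(h, h') = s(g, g') := by
  rcases Sym2.eq_iff.1 hO with ⟨o1, o2⟩ | ⟨o1, o2⟩
  · exact pair_inj_core hcyc hm3 hPF hne1 hlab1 hlab2 o1 o2 hT
  · have := pair_inj_core hcyc hm3 hPF hne1 hlab1 hlab2.symm o1 o2
      (hT.trans Sym2.eq_swap)
    exact this.trans Sym2.eq_swap

lemma pair_cross_core (hcyc : CyclicallyReduced w) (hm3 : 3 ≤ w.length)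
    (hPF : ∀ d, ¬ Periodic w d) {h h' g g' : Fin w.length}
    (hne1 : h ≠ h') (hlab1 : (w.get h).1 = (w.get h').1)
    (hlab2 : (w.get g).1 = (w.get g').1)
    (o1 : org w h = ter w g) (o2 : org w h' = ter w g')
    (hT : s(ter w h, ter w h') = s(org w g, org w g')) : False := by
  rcases Sym2.eq_iff.1 hT with ⟨t1, t2⟩ | ⟨t1, t2⟩
  · exact org_ter_swap_false hm3 o1 t1
  · apply hPF 2
    have hab : org w h ≠ org w h' := fun e => hne1 (org_inj hcyc hlab1 e)
    have hth : ter w h ≠ ter w h' := fun e => hne1 (ter_inj hcyc hlab1 e)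
    have m1 := mv_org_ter h
    have m2 := mv_org_ter h'
    rw [← hlab1] at m2
    have m3 := mv_ter_org g
    rw [← o1, ← t2] at m3
    have m4 := mv_ter_org g'
    rw [← hlab2] at m4
    rw [← o2, ← t1] at m4
    exact cross_scenario hcyc hm3 hab hth m1 m2 m3 m4

lemma pair_cross_false (hcyc : CyclicallyReduced w) (hm3 : 3 ≤ w.length)
    (hPF : ∀ d, ¬ Periodic w d) {h h' g g' : Fin w.length}
    (hne1 : h ≠ h') (hne2 : g ≠ g')
    (hlab1 : (w.get h).1 = (w.get h').1) (hlab2 : (w.get g).1 = (w.get g').1)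
    (hO : s(org w h, org w h') = s(ter w g, ter w g'))
    (hT : s(ter w h, ter w h') = s(org w g, org w g')) : False := by
  rcases Sym2.eq_iff.1 hO with ⟨o1, o2⟩ | ⟨o1, o2⟩
  · exact pair_cross_core hcyc hm3 hPF hne1 hlab1 hlab2 o1 o2 hT
  · exact pair_cross_core hcyc hm3 hPF hne1 hlab1 hlab2.symm o1 o2
      (hT.trans Sym2.eq_swap)


def pm (w : List (Letter k)) (P Q : Sym2 (Fin w.length)) (x : Letter k) : Prop :=
  ∃ a b a' b', P = s(a, b) ∧ Q = s(a', b') ∧ mv w a x a' ∧ mv w b x b'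

lemma adj_pm {P Q : {p : Sym2 (Fin w.length) // ¬ p.IsDiag}} (h : (Upsilon w).Adj P Q) :
    ∃ x, pm w P.1 Q.1 x := by
  obtain ⟨hne, h1, h2, hhh, hlab, hor⟩ := h
  rcases hor with ⟨hp, hq⟩ | ⟨hq, hp⟩
  · refine ⟨((w.get h1).1, true), org w h1, org w h2, ter w h1, ter w h2, hp, hq,
      mv_org_ter h1, ?_⟩
    have := mv_org_ter h2
    rwa [← hlab] at this
  · refine ⟨((w.get h1).1, false), ter w h1, ter w h2, org w h1, org w h2, hp, hq,
      mv_ter_org h1, ?_⟩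
    have := mv_ter_org h2
    rwa [← hlab] at this

lemma pm_step {P Q : Sym2 (Fin w.length)} {x : Letter k} (h : pm w P Q x)
    {a b : Fin w.length} (hP : P = s(a, b)) :
    ∃ p : Fin w.length × Fin w.length, Q = s(p.1, p.2) ∧ mv w a x p.1 ∧ mv w b x p.2 := by
  obtain ⟨cc, d, c', d', hP', hQ', m1, m2⟩ := h
  rw [hP] at hP'
  rcases Sym2.eq_iff.1 hP'.symm with ⟨rfl, rfl⟩ | ⟨rfl, rfl⟩
  · exact ⟨(c', d'), hQ', m1, m2⟩
  · exact ⟨(d', c'), by rw [hQ', Sym2.eq_swap], m2, m1⟩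

lemma walk_getVert_support_get {V' : Type*} {G : SimpleGraph V'} {u v : V'} :
    ∀ (p : G.Walk u v) (i : ℕ) (hi : i < p.support.length),
      p.getVert i = p.support.get ⟨i, hi⟩ := by
  intro p
  induction p with
  | nil =>
      intro i hi
      simp only [SimpleGraph.Walk.support_nil, List.length_singleton] at hi
      interval_cases i
      simp
  | @cons a b cvar h q ih =>
      intro i hi
      cases i with
      | zero => simp
      | succ nn =>
          simp only [SimpleGraph.Walk.support_cons, List.length_cons] at hi
          rw [SimpleGraph.Walk.getVert_cons_succ]
          exact ih nn (by omega)

lemma get_tail {α : Type*} (l : List α) (i : ℕ) (h : i + 1 < l.length) :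
    l.get ⟨i + 1, h⟩ = l.tail.get ⟨i, by cases l with
      | nil => simp at h
      | cons a l => simpa using Nat.lt_of_succ_lt_succ h⟩ := by
  cases l with
  | nil => simp at h
  | cons a l => rfl

lemma cycle_getVert_inj {V' : Type*} {G : SimpleGraph V'} {u : V'} {c : G.Walk u u}
    (hc : c.IsCycle) {i j : ℕ} (hi : i < c.length) (hj : j < c.length)
    (hij : c.getVert (i+1) = c.getVert (j+1)) : i = j := by
  have hlen : c.support.tail.length = c.length := by
    have := SimpleGraph.Walk.length_support c
    rw [List.length_tail, this]
    omega
  have key : ∀ (i : ℕ) (hi : i < c.length),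
      c.getVert (i+1) = c.support.tail.get ⟨i, by omega⟩ := by
    intro i hi
    have h1 : i + 1 < c.support.length := by
      rw [SimpleGraph.Walk.length_support]; omega
    rw [walk_getVert_support_get c (i+1) h1, get_tail]
  rw [key i hi, key j hj] at hij
  have h2 := (hc.support_nodup.get_inj_iff).1 hij
  exact congrArg Fin.val h2

theorem upsilon_acyclic (hw : w ≠ []) (hcyc : CyclicallyReduced w)
    (hnp : ¬ ∃ (g : FreeGroup (Fin k)) (d : ℕ), 2 ≤ d ∧ toFree w = g ^ d) :
    (Upsilon w).IsAcyclic := by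
  intro P c hc
  classical
  have hn3 : 3 ≤ c.length := hc.three_le_length
  have htl : c.support.tail.length = c.length := by
    have := SimpleGraph.Walk.length_support c
    rw [List.length_tail, this]
    omega
  have hcard : 3 ≤ Fintype.card {p : Sym2 (Fin w.length) // ¬ p.IsDiag} := by
    have h1 := hc.support_nodup.length_le_card
    omega
  have hm3 : 3 ≤ w.length := by
    have hsym2 := Sym2.card_subtype_not_diag (α := Fin w.length)
    rw [Fintype.card_fin] at hsym2
    rw [hsym2, Nat.choose_two_right] at hcard
    have h1 : w.length - 1 ≤ w.length := by omega
    by_contra hlt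
    push_neg at hlt
    have h2 : w.length * (w.length - 1) ≤ 2 * 1 :=
      Nat.mul_le_mul (by omega) (by omega)
    omega
  set n := c.length with hn
  have hn0 : 0 < n := by omega
  -- the cyclically extended vertex sequence (using positions 1..n of the cycle)
  set F : ℕ → {p : Sym2 (Fin w.length) // ¬ p.IsDiag} :=
    fun i => c.getVert ((i % n) + 1) with hF
  have hmod1 : ∀ i : ℕ, (i + 1) % n = ((i % n) + 1) % n := by
    intro i
    rw [Nat.add_mod i 1 n, Nat.mod_eq_of_lt (show 1 < n by omega)]
  have hFadj : ∀ i, (Upsilon w).Adj (F i) (F (i + 1)) := by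
    intro i
    have hh : i % n < n := Nat.mod_lt _ hn0
    rcases Nat.lt_or_ge ((i % n) + 1) n with hlt | hge
    · have h2 : (i + 1) % n = (i % n) + 1 := by
        rw [hmod1 i, Nat.mod_eq_of_lt hlt]
      have := c.adj_getVert_succ hlt
      simp only [hF, h2]
      exact this
    · have heq : (i % n) + 1 = n := by omega
      have h2 : (i + 1) % n = 0 := by
        rw [hmod1 i, heq, Nat.mod_self]
      have h3 : F i = c.getVert 0 := by
        rw [show F i = c.getVert (i % n + 1) from rfl, heq, hn]
        rw [SimpleGraph.Walk.getVert_length, SimpleGraph.Walk.getVert_zero]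
      have h4 : F (i + 1) = c.getVert 1 := by simp only [hF, h2]
      rw [h3, h4]
      exact c.adj_getVert_succ (by omega)
  have hFne2 : ∀ i, F (i + 2) ≠ F i := by
    intro i heq
    have hi2 : (i + 2) % n < n := Nat.mod_lt _ hn0
    have hi0 : i % n < n := Nat.mod_lt _ hn0
    have := cycle_getVert_inj hc hi2 hi0 heq
    have h2 : (i + 2) % n = (i + 0) % n := by simpa using this
    have h3 : (2 : ℕ) ≡ 0 [MOD n] := Nat.ModEq.add_left_cancel' i h2
    have h4 : n ∣ 2 := (Nat.modEq_zero_iff_dvd).1 h3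
    have := Nat.le_of_dvd (by norm_num) h4
    omega
  -- choose letters, made periodic
  have hpm0 : ∀ i, ∃ x, pm w (F i).1 (F (i + 1)).1 x := fun i => adj_pm (hFadj i)
  choose ξ0 hξ0 using hpm0
  set ξ : ℕ → Letter k := fun i => ξ0 (i % n) with hξdef
  have hFmod : ∀ i, F (i % n) = F i := by
    intro i
    simp only [hF, Nat.mod_mod_of_dvd _ (dvd_refl n)]
  have hF1mod : ∀ i, F ((i % n) + 1) = F (i + 1) := by
    intro i
    simp only [hF]
    rw [← hmod1 i]
  have hξ : ∀ i, pm w (F i).1 (F (i + 1)).1 (ξ i) := by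
    intro i
    have := hξ0 (i % n)
    rw [hFmod i, hF1mod i] at this
    exact this
  -- tokens
  have hrep : ∀ q : Sym2 (Fin w.length), ∃ p : Fin w.length × Fin w.length, q = s(p.1, p.2) :=
    Sym2.ind (fun x y => ⟨(x, y), rfl⟩)
  let T : ∀ i : ℕ, {p : Fin w.length × Fin w.length // (F i).1 = s(p.1, p.2)} :=
    Nat.rec ⟨(hrep (F 0).1).choose, (hrep (F 0).1).choose_spec⟩ (fun i prev =>
      ⟨(pm_step (hξ i) prev.2).choose, (pm_step (hξ i) prev.2).choose_spec.1⟩)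
  set A : ℕ → Fin w.length := fun i => (T i).1.1 with hA
  set B : ℕ → Fin w.length := fun i => (T i).1.2 with hB
  have hsym : ∀ i, (F i).1 = s(A i, B i) := fun i => (T i).2
  have hmv : ∀ i, mv w (A i) (ξ i) (A (i + 1)) ∧ mv w (B i) (ξ i) (B (i + 1)) := by
    intro i
    exact ⟨(pm_step (hξ i) (T i).2).choose_spec.2.1,
           (pm_step (hξ i) (T i).2).choose_spec.2.2⟩
  have hAB : ∀ i, A i ≠ B i := by
    intro i hab
    apply (F i).2
    rw [hsym i, hab]
    exact Sym2.mk_isDiag_iff.2 rfl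
  have hxne : ∀ i, ξ (i + 1) ≠ Letter.inv (ξ i) := by
    intro i heq
    have h1 : mv w (A (i + 1)) (Letter.inv (ξ i)) (A (i + 2)) := heq ▸ (hmv (i + 1)).1
    have h2 : mv w (A (i + 1)) (Letter.inv (ξ i)) (A i) := mv_rev (hmv i).1
    have hAeq : A (i + 2) = A i := mv_det hcyc hm3 h1 h2
    have h1' : mv w (B (i + 1)) (Letter.inv (ξ i)) (B (i + 2)) := heq ▸ (hmv (i + 1)).2
    have h2' : mv w (B (i + 1)) (Letter.inv (ξ i)) (B i) := mv_rev (hmv i).2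
    have hBeq : B (i + 2) = B i := mv_det hcyc hm3 h1' h2'
    apply hFne2 i
    apply Subtype.ext
    rw [hsym (i + 2), hsym i, hAeq, hBeq]
  have dir : ∀ (C : ℕ → Fin w.length), (∀ i, mv w (C i) (ξ i) (C (i + 1))) →
      (∀ i, C (i + 1) = nxt (C i)) ∨ (∀ i, C i = nxt (C (i + 1))) := by
    intro C hC
    rcases hC 0 with ⟨e1, e2⟩ | ⟨e1, e2⟩
    · left
      intro i
      induction i with
      | zero => exact e2
      | succ nn ih =>
          rcases mv_dir hm3 (hC nn) (hC (nn + 1)) (hxne nn) with ⟨h1, h2⟩ | ⟨h1, h2⟩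
          · exact h2
          · rw [ih] at h1
            exact absurd h1.symm (nxt_nxt_ne hm3 (C nn))
    · right
      intro i
      induction i with
      | zero => exact e2
      | succ nn ih =>
          rcases mv_dir hm3 (hC nn) (hC (nn + 1)) (hxne nn) with ⟨h1, h2⟩ | ⟨h1, h2⟩
          · rw [ih] at h1
            exact absurd h1.symm (nxt_nxt_ne hm3 (C (nn + 1)))
          · exact h2
  have letterF : ∀ (C : ℕ → Fin w.length), (∀ i, mv w (C i) (ξ i) (C (i + 1))) →
      (∀ i, C (i + 1) = nxt (C i)) → ∀ i, w.get (C i) = ξ i := by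
    intro C hC hf i
    rcases hC i with ⟨e1, _⟩ | ⟨e1, e2⟩
    · exact e1
    · rw [hf i] at e2
      exact absurd e2.symm (nxt_nxt_ne hm3 (C i))
  have letterB : ∀ (C : ℕ → Fin w.length), (∀ i, mv w (C i) (ξ i) (C (i + 1))) →
      (∀ i, C i = nxt (C (i + 1))) → ∀ i, w.get (C (i + 1)) = Letter.inv (ξ i) := by
    intro C hC hb i
    rcases hC i with ⟨e1, e2⟩ | ⟨e1, e2⟩
    · rw [hb i] at e2
      exact absurd e2.symm (nxt_nxt_ne hm3 (C (i + 1)))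
    · exact e1
  rcases dir A (fun i => (hmv i).1) with hfA | hbA <;>
    rcases dir B (fun i => (hmv i).2) with hfB | hbB
  · obtain ⟨d, hper⟩ := case_ff hm3 hfA hfB (hAB 0) (fun i => by
      rw [letterF A (fun i => (hmv i).1) hfA i, letterF B (fun i => (hmv i).2) hfB i])
    exact periodic_false hw hcyc hnp hper
  · exact case_fb hcyc hm3 hfA hbB (fun i => by
      rw [letterB B (fun i => (hmv i).2) hbB i, letterF A (fun i => (hmv i).1) hfA i])
  · exact case_fb hcyc hm3 hfB hbA (fun i => by
      rw [letterB A (fun i => (hmv i).1) hbA i, letterF B (fun i => (hmv i).2) hfB i])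
  · obtain ⟨d, hper⟩ := case_bb hm3 hbA hbB (hAB 0) (fun i => by
      rw [letterB A (fun i => (hmv i).1) hbA i, letterB B (fun i => (hmv i).2) hbB i])
    exact periodic_false hw hcyc hnp hper

open SimpleGraph

lemma key_reach {V : Type*} {G : SimpleGraph V} {u v : V}
    (hbridge : ¬ (G \ fromEdgeSet {s(u, v)}).Reachable u v) :
    ∀ x y : V, G.Reachable x y →
      ((G \ fromEdgeSet {s(u, v)}).Reachable x y ∨
       ((G \ fromEdgeSet {s(u, v)}).Reachable x u ∧ (G \ fromEdgeSet {s(u, v)}).Reachable v y) ∨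
       ((G \ fromEdgeSet {s(u, v)}).Reachable x v ∧ (G \ fromEdgeSet {s(u, v)}).Reachable u y)) := by
  set G' := G \ fromEdgeSet {s(u, v)} with hG'
  intro x y hxy
  obtain ⟨p⟩ := hxy
  induction p with
  | nil => exact Or.inl (Reachable.refl _)
  | @cons a b cv hadj q ih =>
      by_cases hab : G'.Adj a b
      · have hra : G'.Reachable a b := hab.reachable
        rcases ih with h | ⟨h1, h2⟩ | ⟨h1, h2⟩
        · exact Or.inl (hra.trans h)
        · exact Or.inr (Or.inl ⟨hra.trans h1, h2⟩)
        · exact Or.inr (Or.inr ⟨hra.trans h1, h2⟩)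
      · have hsab : s(a, b) = s(u, v) := by
          by_contra hne
          apply hab
          rw [hG', sdiff_adj, fromEdgeSet_adj]
          exact ⟨hadj, fun hf => hne hf.1⟩
        rcases Sym2.eq_iff.1 hsab with ⟨rfl, rfl⟩ | ⟨rfl, rfl⟩
        · rcases ih with h | ⟨h1, h2⟩ | ⟨h1, h2⟩
          · exact Or.inr (Or.inl ⟨Reachable.refl _, h⟩)
          · exact (hbridge h1.symm).elim
          · exact Or.inl h2
        · rcases ih with h | ⟨h1, h2⟩ | ⟨h1, h2⟩
          · exact Or.inr (Or.inr ⟨Reachable.refl _, h⟩)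
          · exact Or.inl h2
          · exact (hbridge h1).elim

theorem forest_card : ∀ (N : ℕ) {V : Type*} [Fintype V] (G : SimpleGraph V),
    Nat.card G.edgeSet = N → G.IsAcyclic →
    Nat.card G.ConnectedComponent + N = Fintype.card V := by
  intro N
  induction N with
  | zero =>
      intro V _ G hcard _
      classical
      have hfin : Finite G.edgeSet := Subtype.finite
      have hempty : IsEmpty G.edgeSet := by
        rcases Nat.card_eq_zero.1 hcard with h | h
        · exact h
        · exact absurd h (not_infinite_iff_finite.2 hfin)
      have hbot : G = ⊥ := by
        rw [← edgeSet_eq_empty]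
        rw [Set.eq_empty_iff_forall_notMem]
        intro e he
        exact hempty.false ⟨e, he⟩
      subst hbot
      have hbij : Function.Bijective (SimpleGraph.connectedComponentMk (⊥ : SimpleGraph V)) := by
        constructor
        · intro a b hab
          exact reachable_bot.1 ((SimpleGraph.ConnectedComponent.eq).1 hab)
        · intro cc
          obtain ⟨v, hv⟩ := cc.exists_rep
          exact ⟨v, hv⟩
      rw [Nat.add_zero, ← Nat.card_eq_fintype_card]
      exact (Nat.card_eq_of_bijective _ hbij).symm
  | succ N ih =>
      intro V _ G hcard hG
      classical
      have hfin : Finite G.edgeSet := Subtype.finite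
      have hne : Nonempty G.edgeSet := by
        rcases isEmpty_or_nonempty G.edgeSet with h | h
        · exfalso
          haveI := h
          rw [Nat.card_of_isEmpty] at hcard
          omega
        · exact h
      obtain ⟨⟨e, he⟩⟩ := hne
      induction e using Sym2.ind with
      | _ u v =>
      have huv : G.Adj u v := (mem_edgeSet G).1 he
      set G' := G \ fromEdgeSet {s(u, v)} with hG'
      have hle : G' ≤ G := sdiff_le
      have hbridge : ¬ G'.Reachable u v :=
        ((isBridge_iff).1 ((isAcyclic_iff_forall_adj_isBridge.1 hG) huv))
      have hG'acyc : G'.IsAcyclic := by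
        intro vv cc hcc
        exact hG (cc.mapLe hle) (hcc.mapLe hle)
      have hedge : G'.edgeSet = G.edgeSet \ {s(u, v)} := by
        rw [hG', edgeSet_sdiff, edgeSet_fromEdgeSet, edgeSet_sdiff_sdiff_isDiag]
      have hfinset : G.edgeSet.Finite := Set.toFinite _
      have hcard' : Nat.card G'.edgeSet = N := by
        rw [Nat.card_coe_set_eq, hedge,
          Set.ncard_diff_singleton_of_mem he]
        rw [Nat.card_coe_set_eq] at hcard
        omega
      have IH := ih G' hcard' hG'acyc
      -- count components
      letI : DecidableEq V := Classical.decEq V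
      letI : DecidableRel G.Adj := Classical.decRel _
      letI : DecidableRel G'.Adj := Classical.decRel _
      set φ : G'.ConnectedComponent → G.ConnectedComponent :=
        SimpleGraph.ConnectedComponent.map (SimpleGraph.Hom.ofLE hle) with hφ
      have hφmk : ∀ x : V, φ (G'.connectedComponentMk x) = G.connectedComponentMk x :=
        fun x => rfl
      set cu := G.connectedComponentMk u with hcu
      have key := key_reach hbridge
      have fib : ∀ cc : G.ConnectedComponent,
          (Finset.univ.filter (fun d => φ d = cc)).card = if cc = cu then 2 else 1 := by
        intro cc
        induction cc using SimpleGraph.ConnectedComponent.ind with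
        | _ z =>
        split_ifs with hz
        · have hset : Finset.univ.filter (fun d => φ d = G.connectedComponentMk z)
              = {G'.connectedComponentMk u, G'.connectedComponentMk v} := by
            ext d
            simp only [Finset.mem_filter, Finset.mem_univ, true_and, Finset.mem_insert,
              Finset.mem_singleton]
            constructor
            · intro hd
              induction d using SimpleGraph.ConnectedComponent.ind with
              | _ x =>
              rw [hφmk x, hz] at hd
              have hr : G.Reachable x u := (SimpleGraph.ConnectedComponent.eq).1 hd
              rcases key x u hr with h | ⟨h1, h2⟩ | ⟨h1, h2⟩
              · exact Or.inl ((SimpleGraph.ConnectedComponent.eq).2 h)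
              · exact (hbridge h2.symm).elim
              · exact Or.inr ((SimpleGraph.ConnectedComponent.eq).2 h1)
            · intro hd
              rcases hd with rfl | rfl
              · rw [hφmk u]
                rw [hcu] at hz
                exact hz.symm
              · rw [hφmk v]
                have h1 : G.connectedComponentMk v = G.connectedComponentMk u :=
                  (SimpleGraph.ConnectedComponent.eq).2 huv.symm.reachable
                rw [hcu] at hz
                exact h1.trans hz.symm
          rw [hset, Finset.card_insert_of_notMem, Finset.card_singleton]
          simp only [Finset.mem_singleton]
          intro hf
          exact hbridge ((SimpleGraph.ConnectedComponent.eq).1 hf)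
        · have hset : Finset.univ.filter (fun d => φ d = G.connectedComponentMk z)
              = {G'.connectedComponentMk z} := by
            ext d
            simp only [Finset.mem_filter, Finset.mem_univ, true_and, Finset.mem_singleton]
            constructor
            · intro hd
              induction d using SimpleGraph.ConnectedComponent.ind with
              | _ x =>
              rw [hφmk x] at hd
              have hr : G.Reachable x z := (SimpleGraph.ConnectedComponent.eq).1 hd
              rcases key x z hr with h | ⟨h1, h2⟩ | ⟨h1, h2⟩
              · exact (SimpleGraph.ConnectedComponent.eq).2 h
              · exfalso
                apply hz
                rw [← hd]
                have : G.Reachable x u := (h1.mono hle)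
                exact (SimpleGraph.ConnectedComponent.eq).2 this
              · exfalso
                apply hz
                rw [← hd]
                have hxv : G.Reachable x v := (h1.mono hle)
                have : G.Reachable x u := hxv.trans huv.symm.reachable
                exact (SimpleGraph.ConnectedComponent.eq).2 this
            · intro hd
              rw [hd, hφmk z]
          rw [hset, Finset.card_singleton]
      have htotal : Fintype.card G'.ConnectedComponent
          = ∑ cc : G.ConnectedComponent, (Finset.univ.filter (fun d => φ d = cc)).card := by
        rw [← Finset.card_univ]
        exact Finset.card_eq_sum_card_fiberwise (fun d _ => Finset.mem_univ (φ d))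
      have hsum : Fintype.card G'.ConnectedComponent
          = Fintype.card G.ConnectedComponent + 1 := by
        rw [htotal]
        have : ∀ cc : G.ConnectedComponent,
            (Finset.univ.filter (fun d => φ d = cc)).card
              = 1 + (if cc = cu then 1 else 0) := by
          intro cc
          rw [fib cc]
          split_ifs <;> rfl
        rw [Finset.sum_congr rfl (fun cc _ => this cc), Finset.sum_add_distrib]
        simp [Finset.sum_ite_eq', Finset.card_univ]
      have hNC : Nat.card G'.ConnectedComponent = Nat.card G.ConnectedComponent + 1 := by
        rw [Nat.card_eq_fintype_card, Nat.card_eq_fintype_card, hsum]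
      omega


lemma three_le_of_pair (hcyc : CyclicallyReduced w) (hPF : ∀ d, ¬ Periodic w d)
    {a b : Fin w.length} (hne : a ≠ b) (hlab : (w.get a).1 = (w.get b).1) :
    3 ≤ w.length := by
  by_contra hlt
  push_neg at hlt
  have h1 := a.isLt
  have h2 := b.isLt
  have h3 : a.val ≠ b.val := fun hv => hne (Fin.ext hv)
  have hm2 : w.length = 2 := by omega
  have hb : b = nxt a := by
    apply Fin.ext
    rw [val_nxt]
    have h4 : a.val = 0 ∧ b.val = 1 ∨ a.val = 1 ∧ b.val = 0 := by omega
    rcases h4 with ⟨ha, hb'⟩ | ⟨ha, hb'⟩ <;> simp [ha, hb', hm2]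
  cases hsa : (w.get a).2 <;> cases hsb : (w.get b).2
  · apply hPF 1
    apply periodic_one_of hm2
    rw [← hb, get_eq_false hsb, ← hlab, get_eq_false hsa]
  · apply hcyc' hcyc a
    rw [← hb, get_eq_true hsb, ← hlab, get_eq_false hsa, inv_pair']
  · apply hcyc' hcyc a
    rw [← hb, get_eq_false hsb, ← hlab, get_eq_true hsa, inv_pair]
  · apply hPF 1
    apply periodic_one_of hm2
    rw [← hb, get_eq_true hsb, ← hlab, get_eq_true hsa]

/-- The raw edge map. -/
def Phi (w : List (Letter k)) : Sym2 (Fin w.length) → Sym2 (Sym2 (Fin w.length)) :=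
  Sym2.lift ⟨fun a b => s(s(org w a, org w b), s(ter w a, ter w b)), fun a b => by
    show s(s(org w a, org w b), s(ter w a, ter w b))
        = s(s(org w b, org w a), s(ter w b, ter w a))
    rw [Sym2.eq_swap (a := org w a) (b := org w b),
        Sym2.eq_swap (a := ter w a) (b := ter w b)]⟩

lemma Phi_mk (a b : Fin w.length) :
    Phi w s(a, b) = s(s(org w a, org w b), s(ter w a, ter w b)) := rfl

theorem edge_card (hw : w ≠ []) (hcyc : CyclicallyReduced w)
    (hnp : ¬ ∃ (g : FreeGroup (Fin k)) (d : ℕ), 2 ≤ d ∧ toFree w = g ^ d) :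
    Nat.card (Upsilon w).edgeSet = ∑ j : Fin k, (labelCount w j).choose 2 := by
  classical
  have hPF : ∀ d, ¬ Periodic w d := fun d hd => periodic_false hw hcyc hnp hd
  set S : Fin k → Finset (Fin w.length) :=
    fun j => Finset.univ.filter (fun h => (w.get h).1 = j) with hS
  set T : Finset (Sym2 (Fin w.length)) :=
    Finset.univ.biUnion (fun j => (S j).offDiag.image Sym2.mk.uncurry) with hT
  have hmemT : ∀ q ∈ T, ∃ a b : Fin w.length,
      q = s(a, b) ∧ a ≠ b ∧ (w.get a).1 = (w.get b).1 := by
    intro q hq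
    rw [hT, Finset.mem_biUnion] at hq
    obtain ⟨j, -, hq⟩ := hq
    rw [Finset.mem_image] at hq
    obtain ⟨⟨a, b⟩, hp, rfl⟩ := hq
    rw [Finset.mem_offDiag] at hp
    obtain ⟨hp1, hp2, hp3⟩ := hp
    rw [hS, Finset.mem_filter] at hp1 hp2
    exact ⟨a, b, rfl, hp3, hp1.2.trans hp2.2.symm⟩
  have hmemT' : ∀ (a b : Fin w.length), a ≠ b → (w.get a).1 = (w.get b).1 →
      s(a, b) ∈ T := by
    intro a b hne hlab
    rw [hT, Finset.mem_biUnion]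
    refine ⟨(w.get a).1, Finset.mem_univ _, Finset.mem_image.2 ⟨(a, b),
      Finset.mem_offDiag.2 ⟨?_, ?_, hne⟩, rfl⟩⟩
    · rw [hS, Finset.mem_filter]; exact ⟨Finset.mem_univ _, rfl⟩
    · rw [hS, Finset.mem_filter]; exact ⟨Finset.mem_univ _, hlab.symm⟩
  have hTcard : T.card = ∑ j : Fin k, (labelCount w j).choose 2 := by
    rw [hT, Finset.card_biUnion]
    · exact Finset.sum_congr rfl fun j _ => by rw [Sym2.card_image_offDiag]; rfl
    · intro j _ j' _ hjj'
      refine Finset.disjoint_left.2 fun q hq hq' => ?_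
      rw [Finset.mem_image] at hq hq'
      obtain ⟨⟨a, b⟩, hp, rfl⟩ := hq
      obtain ⟨⟨a', b'⟩, hp', hpp⟩ := hq'
      rw [Finset.mem_offDiag] at hp hp'
      have h1 : (w.get a).1 = j := by
        have := hp.1; rw [hS, Finset.mem_filter] at this; exact this.2
      have h2 : (w.get b).1 = j := by
        have := hp.2.1; rw [hS, Finset.mem_filter] at this; exact this.2
      have h3 : (w.get a').1 = j' := by
        have := hp'.1; rw [hS, Finset.mem_filter] at this; exact this.2
      have h4 : (w.get b').1 = j' := by
        have := hp'.2.1; rw [hS, Finset.mem_filter] at this; exact this.2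
      rcases Sym2.eq_iff.1 hpp with ⟨e1, e2⟩ | ⟨e1, e2⟩
      · dsimp only at e1 e2; exact hjj' (by rw [← h1, ← e1, h3])
      · dsimp only at e1 e2; exact hjj' (by rw [← h2, ← e1, h3])
  haveI : Fintype (Upsilon w).edgeSet := Fintype.ofFinite _
  have hNat : Nat.card (Upsilon w).edgeSet = (Upsilon w).edgeFinset.card := by
    rw [Nat.card_eq_fintype_card, SimpleGraph.edgeFinset_card]
  set E' : Finset (Sym2 (Sym2 (Fin w.length))) :=
    (Upsilon w).edgeFinset.image (Sym2.map Subtype.val) with hE'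
  have hvalinj : Function.Injective
      (Sym2.map (Subtype.val : {p : Sym2 (Fin w.length) // ¬ p.IsDiag} → Sym2 (Fin w.length))) :=
    Sym2.map.injective Subtype.val_injective
  have hEcard : E'.card = (Upsilon w).edgeFinset.card :=
    Finset.card_image_of_injective _ hvalinj
  have hbij : T.card = E'.card := by
    apply Finset.card_nbij (Phi w)
    · intro q hq
      obtain ⟨a, b, rfl, hne, hlab⟩ := hmemT q hq
      rw [Finset.mem_coe, hE', Finset.mem_image]
      have hOnd : ¬ (s(org w a, org w b)).IsDiag := by
        rw [Sym2.mk_isDiag_iff]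
        exact fun e => hne (org_inj hcyc hlab e)
      have hTnd : ¬ (s(ter w a, ter w b)).IsDiag := by
        rw [Sym2.mk_isDiag_iff]
        exact fun e => hne (ter_inj hcyc hlab e)
      refine ⟨s(⟨s(org w a, org w b), hOnd⟩, ⟨s(ter w a, ter w b), hTnd⟩), ?_, ?_⟩
      · rw [SimpleGraph.mem_edgeFinset, SimpleGraph.mem_edgeSet]
        refine ⟨?_, a, b, hne, hlab, Or.inl ⟨rfl, rfl⟩⟩
        intro hPQ
        exact orgpair_ne_terpair hcyc hPF hne hlab (congrArg Subtype.val hPQ)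
      · rw [Sym2.map_pair_eq, Phi_mk]
    · intro q hq q' hq' heq
      obtain ⟨a, b, rfl, hne, hlab⟩ := hmemT q (by exact_mod_cast hq)
      obtain ⟨a', b', rfl, hne', hlab'⟩ := hmemT q' (by exact_mod_cast hq')
      have hm3 : 3 ≤ w.length := three_le_of_pair hcyc hPF hne hlab
      rw [Phi_mk, Phi_mk] at heq
      rcases Sym2.eq_iff.1 heq with ⟨e1, e2⟩ | ⟨e1, e2⟩
      · exact pair_inj hcyc hm3 hPF hne hne' hlab hlab' e1 e2
      · exact (pair_cross_false hcyc hm3 hPF hne hne' hlab hlab' e1 e2).elim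
    · intro e' he'
      have he'' : e' ∈ E' := by exact_mod_cast he'
      rw [hE', Finset.mem_image] at he''
      obtain ⟨e, heF, rfl⟩ := he''
      induction e using Sym2.ind with
      | _ P Q =>
      have hadj : (Upsilon w).Adj P Q := by
        rw [SimpleGraph.mem_edgeFinset, SimpleGraph.mem_edgeSet] at heF
        exact heF
      obtain ⟨hnePQ, h, h', hhh, hlab, hor⟩ := hadj
      refine ⟨s(h, h'), by exact_mod_cast hmemT' h h' hhh hlab, ?_⟩
      rw [Phi_mk, Sym2.map_pair_eq]
      rcases hor with ⟨hp, hq⟩ | ⟨hq, hp⟩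
      · rw [← hp, ← hq]
      · rw [← hp, ← hq]
        exact Sym2.eq_swap
  rw [hNat, ← hEcard, ← hbij, hTcard]


end Stage1

/-- For `w` cyclically reduced, nontrivial and not a proper power, the pair-graph `Υ`
contains no cycles; hence its number of connected components equals
`C(m,2) − ∑_j C(e^j,2)`, where `m = |w|` and `e^j` is the number of `j`-labeled edges. -/
theorem stmt10 {k : ℕ} (w : List (Letter k)) (hw : w ≠ [])
    (hcyc : CyclicallyReduced w)
    (hnp : ¬ ∃ (g : FreeGroup (Fin k)) (d : ℕ), 2 ≤ d ∧ toFree w = g ^ d) :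
    (Upsilon w).IsAcyclic ∧
    Nat.card (Upsilon w).ConnectedComponent
      = w.length.choose 2 - ∑ j : Fin k, (labelCount w j).choose 2 := by
  have hacyc := Stage1.upsilon_acyclic hw hcyc hnp
  refine ⟨hacyc, ?_⟩
  classical
  have hE := Stage1.edge_card hw hcyc hnp
  have hforest := Stage1.forest_card (Nat.card (Upsilon w).edgeSet) (Upsilon w) rfl hacyc
  have hV : Fintype.card {p : Sym2 (Fin w.length) // ¬ p.IsDiag} = w.length.choose 2 := by
    rw [Sym2.card_subtype_not_diag, Fintype.card_fin]
  omega
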